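/- Let R be a positively SG left Noetherian ring and J a compatible SG ideal of R. Then for every n ∈ ℕ, the image of the ideal R_{≥n} under the quotient map R → R/J equals the ideal (R/J)_{≥n} computed in the SG ring R/J; that is, (R_{≥n} + J)/J = (R/J)_{≥n}. -/

import Mathlib

open Pointwise

namespace SG

/-- A semi-graded ring: an internal direct sum decomposition `R = ⊕ₙ Rₙ` into additive
subgroups with `Rₘ·Rₙ ⊆ ⊕_{k ≤ m+n} R_k` and `1 ∈ R₀`. -/
def IsSGRing {R : Type*} [Ring R] (g : ℤ → AddSubgroup R) : Prop :=
  DirectSum.IsInternal g ∧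
    (∀ m n : ℤ, ∀ a ∈ g m, ∀ b ∈ g n, a * b ∈ ⨆ k ≤ m + n, g k) ∧
    (1 : R) ∈ g 0

/-- A semi-graded module over a semi-graded ring. -/
def IsSGModule {R M : Type*} [Ring R] [AddCommGroup M] [Module R M]
    (gR : ℤ → AddSubgroup R) (gM : ℤ → AddSubgroup M) : Prop :=
  DirectSum.IsInternal gM ∧
    ∀ m n : ℤ, 0 ≤ m → ∀ r ∈ gR m, ∀ x ∈ gM n, r • x ∈ ⨆ k ≤ m + n, gM k

/-- A submodule `P` is a semi-graded submodule when `P = ⊕ₙ (Mₙ ⊓ P)`. -/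
def IsSGSubmodule {R M : Type*} [Ring R] [AddCommGroup M] [Module R M]
    (gM : ℤ → AddSubgroup M) (P : Submodule R M) : Prop :=
  P.toAddSubgroup = ⨆ n : ℤ, (gM n ⊓ P.toAddSubgroup)

/-- `⟨X⟩^SG`: the intersection of all semi-graded submodules containing `X`. -/
def sgSpan {R M : Type*} [Ring R] [AddCommGroup M] [Module R M]
    (gM : ℤ → AddSubgroup M) (X : Set M) : Submodule R M :=
  sInf {P : Submodule R M | IsSGSubmodule gM P ∧ X ⊆ P}

/-- A (left) ideal is two-sided. -/
def IsTwoSided {R : Type*} [Ring R] (I : Ideal R) : Prop :=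
  ∀ x ∈ I, ∀ r : R, x * r ∈ I

/-- `R_{≥t}`: the intersection of all two-sided semi-graded ideals containing `⊕_{k ≥ t} R_k`. -/
def geIdeal {R : Type*} [Ring R] (gR : ℤ → AddSubgroup R) (t : ℕ) : Ideal R :=
  sInf {I : Ideal R | IsSGSubmodule gR I ∧ IsTwoSided I ∧
    ∀ k : ℤ, (t : ℤ) ≤ k → gR k ≤ I.toAddSubgroup}

/-- Powers of a (two-sided) ideal, `I⁰ = R`, `I^{n+1} = I·Iⁿ`. -/
def idealPow {R : Type*} [Ring R] (I : Ideal R) : ℕ → Ideal R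
  | 0 => ⊤
  | n + 1 => Submodule.span R ((I : Set R) * (idealPow I n : Set R))

/-- `x` is a torsion element: `(R_{≥t})ⁿ • x = 0` for some `n, t ∈ ℕ`. -/
def IsTorsionElem {R : Type*} [Ring R] (gR : ℤ → AddSubgroup R)
    {M : Type*} [AddCommGroup M] [Module R M] (x : M) : Prop :=
  ∃ t n : ℕ, ∀ y ∈ idealPow (geIdeal gR t) n, y • x = 0

/-- `R'_n`. -/
def RprimeN {R : Type*} [Ring R] (gR : ℤ → AddSubgroup R) (n : ℤ) : Set R :=
  {r : R | r ∈ gR n ∧ ∀ m : ℤ, ∀ h ∈ gR m, r * h ∈ gR (n + m)}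

/-- `R' = ⋃ₙ R'_n`. -/
def Rprime {R : Type*} [Ring R] (gR : ℤ → AddSubgroup R) : Set R :=
  ⋃ n : ℤ, RprimeN gR n

/-- `R''_n`. -/
def RdprimeN {R : Type*} [Ring R] (gR : ℤ → AddSubgroup R) (n : ℤ) : Set R :=
  {r : R | r ∈ RprimeN gR n ∧ ∀ m : ℤ, ∀ h ∈ gR m, h * r ∈ gR (n + m)}

/-- `R'' = ⋃ₙ R''_n`. -/
def Rdprime {R : Type*} [Ring R] (gR : ℤ → AddSubgroup R) : Set R :=
  ⋃ n : ℤ, RdprimeN gR n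

/-- A multiplicatively closed set satisfying the left Ore condition. -/
def IsLeftOreSet {R : Type*} [Ring R] (T : Set R) : Prop :=
  (1 : R) ∈ T ∧ (∀ a ∈ T, ∀ b ∈ T, a * b ∈ T) ∧
    ∀ r : R, ∀ s ∈ T, ∃ r' : R, ∃ s' ∈ T, s' * r = r' * s

/-- A good left Ore set. -/
def IsGoodOre {R : Type*} [Ring R] (gR : ℤ → AddSubgroup R) (T : Set R) : Prop :=
  IsLeftOreSet T ∧ T ⊆ Rdprime gR ∧
    ∀ s ∈ T, ∀ r ∈ Rprime gR, ∃ u ∈ Rprime gR, ∃ v ∈ T, u * s = v * r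

/-- A (left) schematic semi-graded ring: positively semi-graded, left Noetherian, with a
finite family of non-trivial good left Ore sets satisfying the schematic condition. -/
def IsSchematic {R : Type*} [Ring R] (gR : ℤ → AddSubgroup R) : Prop :=
  IsSGRing gR ∧ (∀ n : ℤ, n < 0 → gR n = ⊥) ∧ IsNoetherian R R ∧
    ∃ 𝒮 : Set (Set R), 𝒮.Finite ∧
      (∀ T ∈ 𝒮, IsGoodOre gR T ∧ ∃ x ∈ T, x ∈ ⨆ k ≥ (1 : ℤ), gR k) ∧
      ∀ xf : Set R → R, (∀ T ∈ 𝒮, xf T ∈ T) →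
        ∃ t m : ℕ, (idealPow (geIdeal gR t) m : Set R) ⊆
          ↑(⨆ T ∈ 𝒮, Ideal.span {xf T})

/-- `f^!(M)`: the largest semi-graded submodule of `M` annihilated by `J`, realized as the
sum of all semi-graded submodules annihilated by `J`. -/
def fShriek {R M : Type*} [Ring R] [AddCommGroup M] [Module R M]
    (gM : ℤ → AddSubgroup M) (J : Ideal R) : Submodule R M :=
  sSup {P : Submodule R M | IsSGSubmodule gM P ∧ ∀ j ∈ J, ∀ x ∈ P, j • x = 0}

/-- The induced semigraduation on a quotient module. -/
def quotGrade {R M : Type*} [Ring R] [AddCommGroup M] [Module R M]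
    (gM : ℤ → AddSubgroup M) (K : Submodule R M) : ℤ → AddSubgroup (M ⧸ K) :=
  fun n => (gM n).map (K.mkQ : M →ₗ[R] M ⧸ K).toAddMonoidHom

/-- Condition (*) on an ideal `J`. -/
def CondStar {R : Type*} [Ring R] (gR : ℤ → AddSubgroup R) (J : Ideal R) : Prop :=
  ∀ n t : ℕ, ∀ x ∈ J ⊓ idealPow (geIdeal gR t) n,
    ∃ nx tx : ℕ, ∀ y ∈ idealPow (geIdeal gR tx) nx,
      y * x ∈ Submodule.span R ((J : Set R) * (idealPow (geIdeal gR t) n : Set R))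

/-- Localizable semi-graded module: `R'_n · M_m ⊆ M_{n+m}`. -/
def IsLSG {R M : Type*} [Ring R] [AddCommGroup M] [Module R M]
    (gR : ℤ → AddSubgroup R) (gM : ℤ → AddSubgroup M) : Prop :=
  IsSGModule gR gM ∧
    ∀ n m : ℤ, ∀ r ∈ RprimeN gR n, ∀ x ∈ gM m, r • x ∈ gM (n + m)

universe v

/-- `E` is T-injective (in the category of all modules): maps into `E` from a submodule with
torsion quotient extend. -/
def TInjective {R : Type*} [Ring R] (gR : ℤ → AddSubgroup R)
    (E : Type*) [AddCommGroup E] [Module R E] : Prop :=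
  ∀ (M : Type v) [AddCommGroup M] [Module R M] (P : Submodule R M),
    (∀ x : M ⧸ P, IsTorsionElem gR x) →
      ∀ f : P →ₗ[R] E, ∃ g : M →ₗ[R] E, ∀ x : P, g (x : M) = f x

/-- `E` is T-injective within the category of LSG modules and homogeneous maps. -/
def TInjectiveLSG {R : Type*} [Ring R] (gR : ℤ → AddSubgroup R)
    {E : Type*} [AddCommGroup E] [Module R E] (gE : ℤ → AddSubgroup E) : Prop :=
  ∀ (M : Type v) [AddCommGroup M] [Module R M] (gM : ℤ → AddSubgroup M),
    IsLSG gR gM →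
    ∀ P : Submodule R M, IsSGSubmodule gM P →
      (∀ x : M ⧸ P, IsTorsionElem gR x) →
      ∀ f : P →ₗ[R] E, (∀ n : ℤ, ∀ x : P, (x : M) ∈ gM n → f x ∈ gE n) →
        ∃ g : M →ₗ[R] E, (∀ x : P, g (x : M) = f x) ∧
          ∀ n : ℤ, ∀ x ∈ gM n, g x ∈ gE n

end SG

section Aux

open DirectSum

/-- If `P` is a semi-graded additive subgroup and `x ∈ P`, then every homogeneous
component of `x` lies in `P`. -/
lemma sg_components_mem {R : Type*} [Ring R] (gR : ℤ → AddSubgroup R)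
    (hint : DirectSum.IsInternal gR) (P : AddSubgroup R)
    (hP : P = ⨆ k : ℤ, (gR k ⊓ P)) (f : ⨁ k : ℤ, (gR k))
    (hf : DirectSum.coeAddMonoidHom gR f ∈ P) (k : ℤ) : ((f k : R) ∈ P) := by
  classical
  set x := DirectSum.coeAddMonoidHom gR f with hxdef
  have h1 : x ∈ AddSubgroup.toIntSubmodule (⨆ k : ℤ, (gR k ⊓ P)) := by
    rw [show ((x ∈ AddSubgroup.toIntSubmodule (⨆ k : ℤ, (gR k ⊓ P))) ↔
        x ∈ (⨆ k : ℤ, (gR k ⊓ P))) from Iff.rfl]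
    exact hP ▸ hf
  rw [map_iSup] at h1
  obtain ⟨d, hd⟩ := (Submodule.mem_iSup_iff_exists_dfinsupp' _ x).mp h1
  have hmem : ∀ (i : ℤ) (y : (AddSubgroup.toIntSubmodule (gR i ⊓ P))), (y : R) ∈ gR i ⊓ P :=
    fun i y => y.2
  set g : ⨁ k : ℤ, (gR k) :=
    DFinsupp.mapRange (fun i (y : (AddSubgroup.toIntSubmodule (gR i ⊓ P))) => (⟨(y : R), (hmem i y).1⟩ : gR i))
      (fun i => rfl) d with hgdef
  have hg : DirectSum.coeAddMonoidHom gR g = x := by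
    rw [DirectSum.coeAddMonoidHom_eq_dfinsuppSum, hgdef,
      DFinsupp.sum_mapRange_index (fun i => rfl)]
    exact hd
  have hgf : g = f := hint.injective (by rw [hg, hxdef])
  rw [← hgf, hgdef]
  by_cases hdk : d k = 0
  · simp only [DFinsupp.mapRange_apply, hdk]
    exact P.zero_mem
  · simp only [DFinsupp.mapRange_apply]
    exact (hmem k (d k)).2

end Aux

/-- for a compatible SG ideal `J` of a positively SG left Noetherian ring,
`(R_{≥n} + J)/J = (R/J)_{≥n}` for all `n ∈ ℕ`.  `R/J` is modelled by a surjective ring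
homomorphism `π : R → S` with SG kernel, quotient semigraduation `gS` and compatibility
`π(R') = S'`; the claim is that `π(R_{≥n}) = S_{≥n}`. -/
theorem stmt_13 {R S : Type*} [Ring R] [Ring S]
    (gR : ℤ → AddSubgroup R) (gS : ℤ → AddSubgroup S)
    (hR : SG.IsSGRing gR) (hpos : ∀ k : ℤ, k < 0 → gR k = ⊥)
    (hnoe : IsNoetherian R R)
    (π : R →+* S) (hπ : Function.Surjective π)
    (hgS : ∀ k : ℤ, gS k = (gR k).map π.toAddMonoidHom)
    (hJsg : SG.IsSGSubmodule gR (RingHom.ker π))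
    (hcomp : π '' SG.Rprime gR = SG.Rprime gS)
    (n : ℕ) :
    π '' (SG.geIdeal gR n : Set R) = ((SG.geIdeal gS n : Ideal S) : Set S) := by
  classical
  obtain ⟨hRint, -, -⟩ := hR
  set FR : Set (Ideal R) := {I : Ideal R | SG.IsSGSubmodule gR I ∧ SG.IsTwoSided I ∧
    ∀ k : ℤ, (n : ℤ) ≤ k → gR k ≤ I.toAddSubgroup} with hFR
  set FS : Set (Ideal S) := {I : Ideal S | SG.IsSGSubmodule gS I ∧ SG.IsTwoSided I ∧
    ∀ k : ℤ, (n : ℤ) ≤ k → gS k ≤ I.toAddSubgroup} with hFS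
  have hIdef : SG.geIdeal gR n = sInf FR := rfl
  have hKdef : SG.geIdeal gS n = sInf FS := rfl
  set I := SG.geIdeal gR n with hI
  have hmemI : ∀ x : R, x ∈ I ↔ ∀ P ∈ FR, x ∈ P := fun x => Submodule.mem_sInf
  -- `ker π ≤ ⨆ k, gR k ⊓ Q` whenever `ker π ≤ Q`
  have hker : ∀ Q : AddSubgroup R, (RingHom.ker π).toAddSubgroup ≤ Q →
      ∀ x : R, π x = 0 → x ∈ ⨆ k : ℤ, (gR k ⊓ Q) := by
    intro Q hQ x hx
    have hxker : x ∈ (RingHom.ker π).toAddSubgroup := by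
      simpa [RingHom.mem_ker] using hx
    rw [hJsg] at hxker
    exact (iSup_le fun k => le_iSup_of_le k
      (inf_le_inf_left _ hQ)) hxker
  -- `I` is semi-graded
  have hISG : SG.IsSGSubmodule gR I := by
    refine le_antisymm ?_ (iSup_le fun k => inf_le_right)
    intro x hx
    rw [Submodule.mem_toAddSubgroup] at hx
    obtain ⟨f, hf⟩ := hRint.surjective x
    have hcompmem : ∀ k : ℤ, ((f k : R)) ∈ I := by
      intro k
      rw [hmemI]
      intro P hP
      exact sg_components_mem gR hRint P.toAddSubgroup hP.1 f
        (by rw [hf]; exact (hmemI x).mp hx P hP) k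
    rw [← hf, DirectSum.coeAddMonoidHom_eq_dfinsuppSum]
    refine AddSubgroup.sum_mem _ ?_
    intro k _
    exact AddSubgroup.mem_iSup_of_mem k ⟨(f k).2, hcompmem k⟩
  -- `I` is two-sided
  have hI2 : SG.IsTwoSided I := by
    intro x hx r
    rw [hmemI] at hx ⊢
    exact fun P hP => hP.2.1 x (hx P hP) r
  -- `I` contains `gR k` for `k ≥ n`
  have hIge : ∀ k : ℤ, (n : ℤ) ≤ k → gR k ≤ I.toAddSubgroup := by
    intro k hk x hx
    rw [Submodule.mem_toAddSubgroup, hmemI]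
    exact fun P hP => hP.2.2 k hk hx
  -- Step 2 : `Ideal.map π I ∈ FS`
  have hmapmem : ∀ s : S, s ∈ Ideal.map π I ↔ ∃ x, x ∈ I ∧ π x = s :=
    fun s => Ideal.mem_map_iff_of_surjective π hπ
  have hmapFS : Ideal.map π I ∈ FS := by
    refine ⟨?_, ?_, ?_⟩
    · -- SG
      refine le_antisymm ?_ (iSup_le fun k => inf_le_right)
      intro s hs
      rw [Submodule.mem_toAddSubgroup, hmapmem] at hs
      obtain ⟨x, hxI, rfl⟩ := hs
      have hx2 : x ∈ ⨆ k : ℤ, (gR k ⊓ I.toAddSubgroup) := by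
        rw [← hISG]; exact hxI
      refine AddSubgroup.iSup_induction (G := R)
        (fun k => gR k ⊓ I.toAddSubgroup)
        (C := fun y => π y ∈ ⨆ k : ℤ, (gS k ⊓ (Ideal.map π I).toAddSubgroup)) hx2 ?_ ?_ ?_
      · intro k y hy
        refine AddSubgroup.mem_iSup_of_mem k ⟨?_, ?_⟩
        · rw [hgS]; exact ⟨y, hy.1, rfl⟩
        · exact Ideal.mem_map_of_mem π hy.2
      · simpa using AddSubgroup.zero_mem _
      · intro a b ha hb
        rw [map_add]; exact AddSubgroup.add_mem _ ha hb
    · -- two-sided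
      intro s hs r
      obtain ⟨x, hxI, rfl⟩ := (hmapmem s).mp hs
      obtain ⟨r', rfl⟩ := hπ r
      rw [← map_mul]
      exact Ideal.mem_map_of_mem π (hI2 x hxI r')
    · -- contains gS k
      intro k hk s hs
      rw [hgS] at hs
      obtain ⟨x, hx, rfl⟩ := hs
      exact Ideal.mem_map_of_mem π ((Submodule.mem_toAddSubgroup I).mp (hIge k hk hx))
  -- Step 3 : for every `P ∈ FS`, `Ideal.comap π P ∈ FR`
  have hcomapFR : ∀ P : Ideal S, P ∈ FS → Ideal.comap π P ∈ FR := by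
    intro P hP
    set Q := Ideal.comap π P with hQ
    have hkerQ : (RingHom.ker π).toAddSubgroup ≤ Q.toAddSubgroup := by
      intro x hx
      have : π x = 0 := by simpa [RingHom.mem_ker] using hx
      simp [hQ, Ideal.mem_comap, this]
    refine ⟨?_, ?_, ?_⟩
    · -- SG
      refine le_antisymm ?_ (iSup_le fun k => inf_le_right)
      intro x hx
      have hπx : π x ∈ ⨆ k : ℤ, (gS k ⊓ P.toAddSubgroup) := by
        rw [← hP.1]; exact hx
      refine AddSubgroup.iSup_induction (G := S)
        (fun k => gS k ⊓ P.toAddSubgroup)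
        (C := fun s => ∀ z : R, π z = s → z ∈ ⨆ k : ℤ, (gR k ⊓ Q.toAddSubgroup))
        hπx ?_ ?_ ?_ x rfl
      · intro k s hs z hz
        have hs' : s ∈ gS k ⊓ P.toAddSubgroup := hs
        rw [hgS] at hs'
        obtain ⟨⟨y, hy, rfl⟩, hsP⟩ := hs'
        have h1 : y ∈ ⨆ k : ℤ, (gR k ⊓ Q.toAddSubgroup) :=
          AddSubgroup.mem_iSup_of_mem k ⟨hy, by
            simp only [Submodule.mem_toAddSubgroup, hQ, Ideal.mem_comap]
            exact hsP⟩
        have h2 : z - y ∈ ⨆ k : ℤ, (gR k ⊓ Q.toAddSubgroup) := by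
          refine hker Q.toAddSubgroup hkerQ (z - y) ?_
          rw [map_sub, hz]
          simp
        simpa using AddSubgroup.add_mem _ h1 h2
      · intro z hz
        exact hker Q.toAddSubgroup hkerQ z hz
      · intro a b ha hb z hz
        obtain ⟨y, hy⟩ := hπ a
        have h1 := ha y hy
        have h2 := hb (z - y) (by rw [map_sub, hz, hy]; abel)
        simpa using AddSubgroup.add_mem _ h1 h2
    · -- two-sided
      intro x hx r
      simp only [hQ, Ideal.mem_comap, map_mul] at hx ⊢
      exact hP.2.1 (π x) hx (π r)
    · -- contains gR k
      intro k hk x hx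
      have : π x ∈ gS k := by rw [hgS]; exact ⟨x, hx, rfl⟩
      simp only [Submodule.mem_toAddSubgroup, hQ, Ideal.mem_comap]
      exact hP.2.2 k hk this
  -- conclude
  apply Set.Subset.antisymm
  · rintro s ⟨x, hx, rfl⟩
    rw [SetLike.mem_coe, hKdef, Submodule.mem_sInf]
    intro P hP
    have := hcomapFR P hP
    have hxQ : x ∈ Ideal.comap π P := by
      rw [hIdef] at hx
      exact Submodule.mem_sInf.mp hx _ this
    exact Ideal.mem_comap.mp hxQ
  · intro s hs
    rw [SetLike.mem_coe, hKdef] at hs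
    have hsK : s ∈ Ideal.map π I := Submodule.mem_sInf.mp hs _ hmapFS
    obtain ⟨x, hx, rfl⟩ := (hmapmem s).mp hsK
    exact ⟨x, hx, rfl⟩
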